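/- arXiv:1310.8371 — 3 statements merged into one kernel-verified Lean document; each statement's English description precedes it below -/
import Mathlib

section
/- Let a, b ∈ ℂ with 0 ≤ Re(a) < 1 and b ≠ 1, and let V be a simple highest weight module over the Neveu–Schwarz algebra with highest weight vector u of highest weight (c, h), decomposed as V = ⨁_{n ∈ ℕ} V_{h−n/2} as in the grading assumption. Then the only submodule of the reduced shifted module containing the images of u ⊗ t^m for all m ∈ Z is the whole reduced shifted module. -/
noncomputable section

open Submodule

/-- The underlying data of a `ℤ/2`-graded complex vector space equipped with
operators `L m` (`m ∈ ℤ`) and `G k` (`k ∈ ℤ`, where `G k` represents the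
operator `G_{k+1/2}` indexed by the half-integer `k + 1/2`). -/
structure PreNSMod where
  carrier : Type
  [acg : AddCommGroup carrier]
  [mod : Module ℂ carrier]
  even : Submodule ℂ carrier
  odd : Submodule ℂ carrier
  compl : IsCompl even odd
  L : ℤ → carrier →ₗ[ℂ] carrier
  G : ℤ → carrier →ₗ[ℂ] carrier

attribute [instance] PreNSMod.acg PreNSMod.mod

/-- A Neveu–Schwarz module of central charge `c`. -/
structure NSMod (c : ℂ) extends PreNSMod where
  mapsL_even : ∀ (m : ℤ), ∀ v ∈ even, L m v ∈ even
  mapsL_odd : ∀ (m : ℤ), ∀ v ∈ odd, L m v ∈ odd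
  mapsG_even : ∀ (k : ℤ), ∀ v ∈ even, G k v ∈ odd
  mapsG_odd : ∀ (k : ℤ), ∀ v ∈ odd, G k v ∈ even
  rel_LL : ∀ (m n : ℤ) (v : carrier),
    L m (L n v) - L n (L m v)
      = ((n : ℂ) - (m : ℂ)) • L (m + n) v
        + (if m + n = 0 then (((m : ℂ) ^ 3 - (m : ℂ)) / 12) * c else 0) • v
  rel_LG : ∀ (m k : ℤ) (v : carrier),
    L m (G k v) - G k (L m v) = (((k : ℂ) + 1 / 2) - (m : ℂ) / 2) • G (m + k) v
  rel_GG : ∀ (k l : ℤ) (v : carrier),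
    G k (G l v) + G l (G k v)
      = (2 : ℂ) • L (k + l + 1) v
        - (if k + l + 1 = 0 then (1 / 3) * (((k : ℂ) + 1 / 2) ^ 2 - 1 / 4) * c else 0) • v

/-- A submodule (invariant subspace) of a Neveu–Schwarz module. -/
def NSMod.IsSubmodule {c : ℂ} (S : NSMod c) (W : Submodule ℂ S.carrier) : Prop :=
  (∀ (m : ℤ), ∀ v ∈ W, S.L m v ∈ W) ∧ (∀ (k : ℤ), ∀ v ∈ W, S.G k v ∈ W)

/-- Simplicity (irreducibility) of a Neveu–Schwarz module. -/
def NSMod.IsSimple {c : ℂ} (S : NSMod c) : Prop :=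
  (∃ v : S.carrier, v ≠ 0) ∧
    ∀ W : Submodule ℂ S.carrier, S.IsSubmodule W → W = ⊥ ∨ W = ⊤

/-- `W` is a nonzero submodule which is simple as a module (it has no invariant
subspaces other than `⊥` and itself). -/
def NSMod.IsSimpleSubmodule {c : ℂ} (S : NSMod c) (W : Submodule ℂ S.carrier) : Prop :=
  S.IsSubmodule W ∧ W ≠ ⊥ ∧
    ∀ W' : Submodule ℂ S.carrier, S.IsSubmodule W' → W' ≤ W → W' = ⊥ ∨ W' = W

/-- A homomorphism of Neveu–Schwarz modules: a linear map commuting with all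
the operators `L m` and `G k`. -/
structure NSHom {c c' : ℂ} (S : NSMod c) (T : NSMod c') where
  toFun : S.carrier →ₗ[ℂ] T.carrier
  commL : ∀ (m : ℤ) (v : S.carrier), toFun (S.L m v) = T.L m (toFun v)
  commG : ∀ (k : ℤ) (v : S.carrier), toFun (S.G k v) = T.G k (toFun v)

/-- Two Neveu–Schwarz modules are isomorphic if there is a bijective
homomorphism between them. -/
def NSIso {c c' : ℂ} (S : NSMod c) (T : NSMod c') : Prop :=
  ∃ f : NSHom S T, Function.Bijective f.toFun

/-- A realization of the intermediate series module `SA_{a,b}` inside a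
Neveu–Schwarz module `S` of central charge `0`: a basis `x j` (`j ∈ ℤ`, even)
and `y j` (`j ∈ ℤ`, representing `y_{j+1/2}`, odd) on which the operators act
by the defining formulas of `SA_{a,b}`. -/
structure SAFamily (a b : ℂ) (S : NSMod 0) where
  x : ℤ → S.carrier
  y : ℤ → S.carrier
  x_even : ∀ j : ℤ, x j ∈ S.even
  y_odd : ∀ j : ℤ, y j ∈ S.odd
  indep : LinearIndependent ℂ (Sum.elim x y)
  spans : Submodule.span ℂ (Set.range x ∪ Set.range y) = ⊤
  act_Lx : ∀ i j : ℤ, S.L i (x j) = (a + (j : ℂ) + (i : ℂ) * b) • x (i + j)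
  act_Ly : ∀ i j : ℤ,
    S.L i (y j) = (a + 1 / 2 + (j : ℂ) + (i : ℂ) * (b - 1 / 2)) • y (i + j)
  act_Gx : ∀ i j : ℤ, S.G i (x j) = y (i + j)
  act_Gy : ∀ i j : ℤ,
    S.G i (y j) = (a + 1 / 2 + (j : ℂ) + (2 * (i : ℂ) + 1) * (b - 1 / 2)) • x (i + j + 1)

/-- A realization of the intermediate series module `SA'_{a,b}` (for
`0 ≤ Re a < 1`, `b ≠ 1`) inside a Neveu–Schwarz module `S` of central
charge `0`.  For `(a,b) ≠ (1/2,1/2)` this is `SA_{a,b}` itself; for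
`(a,b) = (1/2,1/2)` it is the quotient `SA_{1/2,1/2}/ℂ·y_{-1/2}`, in which
the image of `y_{-1/2}` (here `y (-1)`) is zero and the remaining vectors
form a basis.  The action formulas hold verbatim in both cases. -/
structure SA'Family (a b : ℂ) (S : NSMod 0) where
  x : ℤ → S.carrier
  y : ℤ → S.carrier
  x_even : ∀ j : ℤ, x j ∈ S.even
  y_odd : ∀ j : ℤ, y j ∈ S.odd
  spans : Submodule.span ℂ (Set.range x ∪ Set.range y) = ⊤
  indep_special : a = 1 / 2 ∧ b = 1 / 2 →
    y (-1) = 0 ∧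
      LinearIndependent ℂ (Sum.elim x (fun j : {j : ℤ // j ≠ -1} => y j.1))
  indep_generic : ¬(a = 1 / 2 ∧ b = 1 / 2) → LinearIndependent ℂ (Sum.elim x y)
  act_Lx : ∀ i j : ℤ, S.L i (x j) = (a + (j : ℂ) + (i : ℂ) * b) • x (i + j)
  act_Ly : ∀ i j : ℤ,
    S.L i (y j) = (a + 1 / 2 + (j : ℂ) + (i : ℂ) * (b - 1 / 2)) • y (i + j)
  act_Gx : ∀ i j : ℤ, S.G i (x j) = y (i + j)
  act_Gy : ∀ i j : ℤ,
    S.G i (y j) = (a + 1 / 2 + (j : ℂ) + (2 * (i : ℂ) + 1) * (b - 1 / 2)) • x (i + j + 1)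

/-- `u` is a highest weight vector of weight `(c,h)` generating the
Neveu–Schwarz module `S` (of central charge `c`). -/
structure IsHW {c : ℂ} (h : ℂ) (S : NSMod c) (u : S.carrier) : Prop where
  ne_zero : u ≠ 0
  mem_even : u ∈ S.even
  hw0 : S.L 0 u = h • u
  hwL : ∀ n : ℤ, 1 ≤ n → S.L n u = 0
  hwG : ∀ k : ℤ, 0 ≤ k → S.G k u = 0
  gen : ∀ W : Submodule ℂ S.carrier, S.IsSubmodule W → u ∈ W → W = ⊤

/-- A realization of the tensor product Neveu–Schwarz module `V ⊗ S` (with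
`V` of central charge `c` and `S` of central charge `0`) as a Neveu–Schwarz
module `T` of central charge `c`, via the bilinear map `t`. -/
structure TensorWitness {c : ℂ} (V : NSMod c) (S : NSMod 0) (T : NSMod c) where
  t : V.carrier →ₗ[ℂ] S.carrier →ₗ[ℂ] T.carrier
  isTensor : IsTensorProduct t
  grade_ee : ∀ v ∈ V.even, ∀ w ∈ S.even, t v w ∈ T.even
  grade_oo : ∀ v ∈ V.odd, ∀ w ∈ S.odd, t v w ∈ T.even
  grade_eo : ∀ v ∈ V.even, ∀ w ∈ S.odd, t v w ∈ T.odd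
  grade_oe : ∀ v ∈ V.odd, ∀ w ∈ S.even, t v w ∈ T.odd
  actL : ∀ (m : ℤ) (v : V.carrier) (w : S.carrier),
    T.L m (t v w) = t (V.L m v) w + t v (S.L m w)
  actG_even : ∀ (k : ℤ), ∀ v ∈ V.even, ∀ w : S.carrier,
    T.G k (t v w) = t (V.G k v) w + t v (S.G k w)
  actG_odd : ∀ (k : ℤ), ∀ v ∈ V.odd, ∀ w : S.carrier,
    T.G k (t v w) = t (V.G k v) w - t v (S.G k w)

/-- The PBW monomial `L_{-n₁} ⋯ L_{-n_p} G_{-r₁} ⋯ G_{-r_q} u`, where the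
second list records each half-integer `r = k - 1/2` by the integer `k`
(so that `G_{-r}` is the operator `G (-k)`). -/
def vermaMonomial {c : ℂ} (M : NSMod c) (u : M.carrier) (p : List ℤ × List ℤ) :
    M.carrier :=
  (p.1.map fun n => M.L (-n)).foldr (fun f v => f v)
    ((p.2.map fun k => M.G (-k)).foldr (fun f v => f v) u)

/-- The index set for the PBW basis of a Verma module: weakly decreasing lists
of positive integers `n₁ ≥ ⋯ ≥ n_p ≥ 1`, together with strictly decreasing
lists of positive half-integers `r₁ > ⋯ > r_q > 0` (with `r = k - 1/2`
recorded by the integer `k ≥ 1`). -/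
def VermaIndex : Type :=
  {p : List ℤ × List ℤ //
    p.1.Chain' (· ≥ ·) ∧ (∀ n ∈ p.1, 1 ≤ n) ∧
      p.2.Chain' (· > ·) ∧ (∀ k ∈ p.2, 1 ≤ k)}

/-- `M` is the Verma module of highest weight `(c,h)` with highest weight
vector `u`: the PBW monomials in the negative-mode operators applied to `u`
form a basis of `M`. -/
def IsVerma {c : ℂ} (h : ℂ) (M : NSMod c) (u : M.carrier) : Prop :=
  IsHW h M u ∧
    LinearIndependent ℂ (fun p : VermaIndex => vermaMonomial M u p.1) ∧
    Submodule.span ℂ (Set.range fun p : VermaIndex => vermaMonomial M u p.1) = ⊤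

/-- The grading assumption on a highest weight module `V` of highest weight
`(c,h)`: `V = ⨁_{n ∈ ℕ} V_{h-n/2}` where `D n = V_{h-n/2}` is the
`L₀`-eigenspace with eigenvalue `h - n/2`, contained in the even part for
`n` even and the odd part for `n` odd, and `u ∈ D 0`. -/
structure GradedHW {c : ℂ} (h : ℂ) (V : NSMod c) (u : V.carrier)
    (D : ℕ → Submodule ℂ V.carrier) : Prop where
  hw : IsHW h V u
  u_mem : u ∈ D 0
  internal : DirectSum.IsInternal D
  eig : ∀ (n : ℕ), ∀ v ∈ D n, V.L 0 v = (h - (n : ℂ) / 2) • v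
  even_part : ∀ n : ℕ, Even n → D n ≤ V.even
  odd_part : ∀ n : ℕ, Odd n → D n ≤ V.odd

/-- A realization of the shifted module `V ⊗ ℂ[t^{±1/2}]` on the graded
vector space `Sh`.  Here `ι p v` represents `v ⊗ t^{p/2}` (half-integers
`s ∈ (1/2)ℤ` are recorded by integers `p` with `s = p/2`), and `D n` is the
weight space `V_{h - n/2}` (so `d = -n/2`).  The case distinction
`s + d ∈ ℤ` versus `s + d ∈ ℤ + 1/2` becomes `2 ∣ (p - n)` versus its
negation. -/
structure ShiftedWitness (a b : ℂ) {c : ℂ} (V : NSMod c)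
    (D : ℕ → Submodule ℂ V.carrier) (Sh : PreNSMod) where
  ι : ℤ → V.carrier →ₗ[ℂ] Sh.carrier
  directSum : Function.Bijective
    (Finsupp.lsum ℂ ι : (ℤ →₀ V.carrier) →ₗ[ℂ] Sh.carrier)
  grade_even : ∀ p : ℤ, (2 : ℤ) ∣ p → ∀ v : V.carrier, ι p v ∈ Sh.even
  grade_odd : ∀ p : ℤ, ¬(2 : ℤ) ∣ p → ∀ v : V.carrier, ι p v ∈ Sh.odd
  actL : ∀ (k p : ℤ) (n : ℕ), ∀ v ∈ D n,
    Sh.L k (ι p v) = ι (p + 2 * k) (V.L k v)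
      + (if (2 : ℤ) ∣ (p - (n : ℤ))
          then a + (p : ℂ) / 2 + (k : ℂ) * b + (n : ℂ) / 2
          else a + (p : ℂ) / 2 + (k : ℂ) * (b - 1 / 2) + (n : ℂ) / 2) •
            ι (p + 2 * k) v
  actG : ∀ (k p : ℤ) (n : ℕ), ∀ v ∈ D n,
    Sh.G k (ι p v) = ι (p + 2 * k + 1) (V.G k v)
      + ((-1 : ℂ) ^ n *
          (if (2 : ℤ) ∣ (p - (n : ℤ)) then 1
            else a + (p : ℂ) / 2 + (2 * (k : ℂ) + 1) * (b - 1 / 2) + (n : ℂ) / 2)) •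
            ι (p + 2 * k + 1) v

/-- A realization of the *reduced* shifted module: the quotient of the
shifted module `V ⊗ ℂ[t^{±1/2}]` by the copy of `V` spanned by the vectors
`v ⊗ t^{d - 1/2}` (`v ∈ V_{h+d}`) when `(a,b) = (1/2,1/2)`, and the shifted
module itself otherwise. -/
structure RedShiftedWitness (a b : ℂ) {c : ℂ} (V : NSMod c)
    (D : ℕ → Submodule ℂ V.carrier) (R : NSMod c) where
  ι : ℤ → V.carrier →ₗ[ℂ] R.carrier
  surj : Function.Surjective
    (Finsupp.lsum ℂ ι : (ℤ →₀ V.carrier) →ₗ[ℂ] R.carrier)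
  ker_special : a = 1 / 2 ∧ b = 1 / 2 →
    LinearMap.ker (Finsupp.lsum ℂ ι : (ℤ →₀ V.carrier) →ₗ[ℂ] R.carrier)
      = Submodule.span ℂ
          {w : ℤ →₀ V.carrier | ∃ n : ℕ, ∃ v ∈ D n, w = Finsupp.single (-(n : ℤ) - 1) v}
  ker_generic : ¬(a = 1 / 2 ∧ b = 1 / 2) →
    LinearMap.ker (Finsupp.lsum ℂ ι : (ℤ →₀ V.carrier) →ₗ[ℂ] R.carrier) = ⊥
  grade_even : ∀ p : ℤ, (2 : ℤ) ∣ p → ∀ v : V.carrier, ι p v ∈ R.even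
  grade_odd : ∀ p : ℤ, ¬(2 : ℤ) ∣ p → ∀ v : V.carrier, ι p v ∈ R.odd
  actL : ∀ (k p : ℤ) (n : ℕ), ∀ v ∈ D n,
    R.L k (ι p v) = ι (p + 2 * k) (V.L k v)
      + (if (2 : ℤ) ∣ (p - (n : ℤ))
          then a + (p : ℂ) / 2 + (k : ℂ) * b + (n : ℂ) / 2
          else a + (p : ℂ) / 2 + (k : ℂ) * (b - 1 / 2) + (n : ℂ) / 2) •
            ι (p + 2 * k) v
  actG : ∀ (k p : ℤ) (n : ℕ), ∀ v ∈ D n,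
    R.G k (ι p v) = ι (p + 2 * k + 1) (V.G k v)
      + ((-1 : ℂ) ^ n *
          (if (2 : ℤ) ∣ (p - (n : ℤ)) then 1
            else a + (p : ℂ) / 2 + (2 * (k : ℂ) + 1) * (b - 1 / 2) + (n : ℂ) / 2)) •
            ι (p + 2 * k + 1) v

/-- `φ` is a shifted character at level `s = p/2` on the Verma module `M`
with grading `D` and highest weight vector `u`:  `φ u = 1` and `φ` satisfies
the defining recursions on homogeneous vectors (`w ∈ D n` means
`L₀ w = (h + d) w` with `d = -n/2` and `w` of parity `n mod 2`; the operator
`G (-j)` is `G_{-r}` with `r = j - 1/2 > 0`). -/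
def IsShiftedChar (a b : ℂ) {c : ℂ} (M : NSMod c)
    (D : ℕ → Submodule ℂ M.carrier) (u : M.carrier) (p : ℤ)
    (φ : M.carrier →ₗ[ℂ] ℂ) : Prop :=
  φ u = 1 ∧
    (∀ (n : ℕ), ∀ w ∈ D n, ∀ k : ℤ, 1 ≤ k →
      φ (M.L (-k) w)
        = (if (2 : ℤ) ∣ (p - (n : ℤ))
            then -(a + (p : ℂ) / 2 + (k : ℂ) - (k : ℂ) * b + (n : ℂ) / 2)
            else -(a + (p : ℂ) / 2 + (k : ℂ) - (k : ℂ) * (b - 1 / 2) + (n : ℂ) / 2))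
          * φ w) ∧
    (∀ (n : ℕ), ∀ w ∈ D n, ∀ j : ℤ, 1 ≤ j →
      φ (M.G (-j) w)
        = (if (2 : ℤ) ∣ (p - (n : ℤ))
            then -(-1 : ℂ) ^ n *
              (a + (p : ℂ) / 2 + ((j : ℂ) - 1 / 2)
                - 2 * ((j : ℂ) - 1 / 2) * (b - 1 / 2) + (n : ℂ) / 2)
            else -(-1 : ℂ) ^ n)
          * φ w)
/-- Lemma 3.3: for a simple highest weight module `V`,
the reduced shifted module is generated by the images of `u ⊗ t^m`
(`m ∈ ℤ + 1/2`, i.e. `ι p u` with `p` odd): the only submodule containing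
all of them is the whole module. -/
theorem reduced_shifted_generated (a b c h : ℂ)
    (ha0 : 0 ≤ a.re) (ha1 : a.re < 1) (hb : b ≠ 1)
    (V : NSMod c) (u : V.carrier) (D : ℕ → Submodule ℂ V.carrier)
    (hV : GradedHW h V u D) (hsimple : V.IsSimple)
    (R : NSMod c) (rsw : RedShiftedWitness a b V D R)
    (W : Submodule ℂ R.carrier) (hW : R.IsSubmodule W)
    (hu : ∀ p : ℤ, Odd p → rsw.ι p u ∈ W) :
    W = ⊤ := by
  classical
  set U : Submodule ℂ V.carrier := ⨅ p : ℤ, Submodule.comap (rsw.ι p) W with hUdef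
  have memU : ∀ v : V.carrier, v ∈ U ↔ ∀ p : ℤ, rsw.ι p v ∈ W := by
    intro v
    simp [hUdef, Submodule.mem_iInf, Submodule.mem_comap]
  have smul_cancel : ∀ (s : ℂ) (x : R.carrier), s ≠ 0 → s • x ∈ W → x ∈ W := by
    intro s x hs hx
    have hx' : x = s⁻¹ • (s • x) := by rw [smul_smul, inv_mul_cancel₀ hs, one_smul]
    rw [hx']; exact W.smul_mem _ hx
  -- u ∈ U
  have key : ∀ k : ℤ, 0 ≤ k → ∀ p : ℤ, ¬ Odd p →
      (a + ((p : ℂ) - 2 * (k : ℂ) - 1) / 2 + (2 * (k : ℂ) + 1) * (b - 1 / 2))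
        • rsw.ι p u ∈ W := by
    intro k hk p hp
    obtain ⟨r, hr⟩ := Int.not_odd_iff_even.mp hp
    have hact := rsw.actG k (p - 2 * k - 1) 0 u hV.u_mem
    have hidx : p - 2 * k - 1 + 2 * k + 1 = p := by ring
    rw [hidx] at hact
    have hGu : V.G k u = 0 := hV.hw.hwG k hk
    have hdvd : ¬ (2 : ℤ) ∣ (p - 2 * k - 1 - ((0 : ℕ) : ℤ)) := by
      simp only [Nat.cast_zero, sub_zero]
      omega
    rw [hGu, if_neg hdvd, map_zero, zero_add, pow_zero, one_mul] at hact
    have hodd : Odd (p - 2 * k - 1) := ⟨r - k - 1, by omega⟩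
    have hmem := hW.2 k _ (hu (p - 2 * k - 1) hodd)
    rw [hact] at hmem
    have hcast : ((p - 2 * k - 1 : ℤ) : ℂ) = (p : ℂ) - 2 * (k : ℂ) - 1 := by push_cast; ring
    have : a + ((p - 2 * k - 1 : ℤ) : ℂ) / 2 + (2 * (k : ℂ) + 1) * (b - 1 / 2) + ((0:ℕ) : ℂ) / 2
        = a + ((p : ℂ) - 2 * (k : ℂ) - 1) / 2 + (2 * (k : ℂ) + 1) * (b - 1 / 2) := by
      push_cast; ring
    rwa [this] at hmem
  have hu_even : ∀ p : ℤ, ¬ Odd p → rsw.ι p u ∈ W := by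
    intro p hp
    by_cases hs0 : (a + ((p : ℂ) - 2 * ((0:ℤ) : ℂ) - 1) / 2 + (2 * ((0:ℤ) : ℂ) + 1) * (b - 1 / 2)) = 0
    · refine smul_cancel _ _ ?_ (key 1 (by norm_num) p hp)
      intro h1
      apply hb
      push_cast at hs0 h1
      linear_combination (h1 - hs0) / 2
    · exact smul_cancel _ _ hs0 (key 0 (by norm_num) p hp)
  have huU : u ∈ U := (memU u).mpr (fun p => by
    by_cases hp : Odd p
    · exact hu p hp
    · exact hu_even p hp)
  -- eigenvector lemma
  have hindep := hV.internal.submodule_iSupIndep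
  have hsupD : (⨆ n, D n) = ⊤ := hV.internal.submodule_iSup_eq_top
  have eigen : ∀ (μ : ℂ) (w : V.carrier), V.L 0 w = μ • w →
      (∃ m : ℕ, w ∈ D m) ∨ w = 0 := by
    intro μ w hw
    have hwmem : w ∈ ⨆ n, D n := hsupD ▸ Submodule.mem_top
    rw [Submodule.mem_iSup_iff_exists_finsupp] at hwmem
    obtain ⟨f, hf, hfw⟩ := hwmem
    have h1 : V.L 0 w = ∑ n ∈ f.support, (h - (n : ℂ) / 2) • f n := by
      rw [← hfw, Finsupp.sum, map_sum]
      exact Finset.sum_congr rfl fun n _ => hV.eig n (f n) (hf n)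
    have h2 : μ • w = ∑ n ∈ f.support, μ • f n := by
      rw [← hfw, Finsupp.sum, Finset.smul_sum]
    have hsum : ∑ n ∈ f.support, ((h - (n : ℂ) / 2) - μ) • f n = 0 := by
      have e : ∑ n ∈ f.support, ((h - (n : ℂ) / 2) - μ) • f n = V.L 0 w - μ • w := by
        rw [h1, h2, ← Finset.sum_sub_distrib]
        exact Finset.sum_congr rfl fun n _ => sub_smul _ _ _
      rw [e, hw, sub_self]
    have hzero : ∀ n ∈ f.support, ((h - (n : ℂ) / 2) - μ) ≠ 0 → f n = 0 := by
      intro n hn hc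
      have h3 : ((h - (n : ℂ) / 2) - μ) • f n
          = - ∑ m ∈ f.support.erase n, ((h - (m : ℂ) / 2) - μ) • f m :=
        by
        have h5 := hsum
        rw [← Finset.sum_erase_add _ _ hn] at h5
        exact eq_neg_of_add_eq_zero_right h5
      have hm1 : ((h - (n : ℂ) / 2) - μ) • f n ∈ D n := (D n).smul_mem _ (hf n)
      have hm2 : ((h - (n : ℂ) / 2) - μ) • f n ∈ ⨆ (m) (_ : m ≠ n), D m := by
        rw [h3]
        refine Submodule.neg_mem _ (Submodule.sum_mem _ fun m hm => ?_)
        exact Submodule.smul_mem _ _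
          (Submodule.mem_iSup_of_mem m
            (Submodule.mem_iSup_of_mem (Finset.mem_erase.mp hm).1 (hf m)))
      have h4 := Submodule.disjoint_def.mp (hindep n) _ hm1 hm2
      exact (smul_eq_zero.mp h4).resolve_left hc
    by_cases hex : ∃ m : ℕ, μ = h - (m : ℂ) / 2
    · obtain ⟨m₀, hm₀⟩ := hex
      left
      refine ⟨m₀, ?_⟩
      rw [← hfw, Finsupp.sum]
      refine Submodule.sum_mem _ fun n hn => ?_
      by_cases hnm : n = m₀
      · subst hnm; exact hf n
      · have hfn : f n = 0 := by
          refine hzero n hn fun hc => hnm ?_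
          have hcc : (n : ℂ) = (m₀ : ℂ) := by
            rw [hm₀] at hc
            linear_combination -2 * hc
          exact_mod_cast hcc
        rw [hfn]; exact Submodule.zero_mem _
    · right
      rw [← hfw, Finsupp.sum]
      exact Finset.sum_eq_zero fun n hn =>
        hzero n hn fun hc => hex ⟨n, by linear_combination -hc⟩
  -- the submodule X
  set X : Submodule ℂ V.carrier := ⨆ n : ℕ, (D n ⊓ U) with hXdef
  have hXL : ∀ (k : ℤ), ∀ v ∈ X, V.L k v ∈ X := by
    intro k v hv
    have hmap : Submodule.map (V.L k) X ≤ X := by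
      rw [hXdef, Submodule.map_iSup]
      refine iSup_le fun n => ?_
      rw [Submodule.map_le_iff_le_comap]
      rintro v ⟨hvD, hvU⟩
      show V.L k v ∈ ⨆ n : ℕ, (D n ⊓ U)
      have heig : V.L 0 (V.L k v) = (h - (n : ℂ) / 2 + (k : ℂ)) • V.L k v := by
        have h1 := V.rel_LL 0 k v
        have h2 : V.L 0 v = (h - (n : ℂ) / 2) • v := hV.eig n v hvD
        rw [h2, map_smul, zero_add] at h1
        have h3 : (if (0 : ℤ) + k = 0 then
            ((((0 : ℤ) : ℂ)) ^ 3 - (((0 : ℤ) : ℂ))) / 12 * c else 0) = 0 := by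
          split <;> norm_num
        rw [zero_add] at h3
        rw [h3, zero_smul, add_zero] at h1
        have h4 := eq_add_of_sub_eq h1
        rw [h4, ← add_smul]
        congr 1
        push_cast
        ring
      have hvU' : ∀ q : ℤ, rsw.ι q (V.L k v) ∈ W := by
        intro q
        have hact := rsw.actL k (q - 2 * k) n v hvD
        have hidx : q - 2 * k + 2 * k = q := by ring
        rw [hidx] at hact
        rw [eq_sub_of_add_eq hact.symm]
        exact Submodule.sub_mem W (hW.1 k _ ((memU v).mp hvU _))
          (W.smul_mem _ ((memU v).mp hvU q))
      rcases eigen _ _ heig with ⟨m, hm⟩ | h0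
      · exact Submodule.mem_iSup_of_mem m (Submodule.mem_inf.mpr ⟨hm, (memU _).mpr hvU'⟩)
      · rw [h0]; exact Submodule.zero_mem _
    exact hmap ⟨v, hv, rfl⟩
  have hXG : ∀ (k : ℤ), ∀ v ∈ X, V.G k v ∈ X := by
    intro k v hv
    have hmap : Submodule.map (V.G k) X ≤ X := by
      rw [hXdef, Submodule.map_iSup]
      refine iSup_le fun n => ?_
      rw [Submodule.map_le_iff_le_comap]
      rintro v ⟨hvD, hvU⟩
      show V.G k v ∈ ⨆ n : ℕ, (D n ⊓ U)
      have heig : V.L 0 (V.G k v) = (h - (n : ℂ) / 2 + (k : ℂ) + 1 / 2) • V.G k v := by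
        have h1 := V.rel_LG 0 k v
        have h2 : V.L 0 v = (h - (n : ℂ) / 2) • v := hV.eig n v hvD
        rw [h2, map_smul, zero_add] at h1
        have h4 := eq_add_of_sub_eq h1
        rw [h4, ← add_smul]
        congr 1
        push_cast
        ring
      have hvU' : ∀ q : ℤ, rsw.ι q (V.G k v) ∈ W := by
        intro q
        have hact := rsw.actG k (q - 2 * k - 1) n v hvD
        have hidx : q - 2 * k - 1 + 2 * k + 1 = q := by ring
        rw [hidx] at hact
        rw [eq_sub_of_add_eq hact.symm]
        exact Submodule.sub_mem W (hW.2 k _ ((memU v).mp hvU _))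
          (W.smul_mem _ ((memU v).mp hvU q))
      rcases eigen _ _ heig with ⟨m, hm⟩ | h0
      · exact Submodule.mem_iSup_of_mem m (Submodule.mem_inf.mpr ⟨hm, (memU _).mpr hvU'⟩)
      · rw [h0]; exact Submodule.zero_mem _
    exact hmap ⟨v, hv, rfl⟩
  have huX : u ∈ X :=
    Submodule.mem_iSup_of_mem 0 (Submodule.mem_inf.mpr ⟨hV.u_mem, huU⟩)
  have hXtop : X = ⊤ := hV.hw.gen X ⟨hXL, hXG⟩ huX
  have hXU : X ≤ U := iSup_le fun n => inf_le_right
  have hall : ∀ (p : ℤ) (v : V.carrier), rsw.ι p v ∈ W := fun p v =>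
    (memU v).mp (hXU (hXtop ▸ Submodule.mem_top)) p
  rw [eq_top_iff]
  rintro r -
  obtain ⟨f, rfl⟩ := rsw.surj r
  rw [Finsupp.lsum_apply, Finsupp.sum]
  exact Submodule.sum_mem W fun p _ => hall p (f p)
end
end

section
/- Let a, b ∈ ℂ with 0 ≤ Re(a) < 1 and b ≠ 1, and let V be a simple highest weight module over the Neveu–Schwarz algebra with highest weight vector u of highest weight (c, h), decomposed as V = ⨁_{n ∈ ℕ} V_{h−n/2} as in the grading assumption. Then for every s ∈ (1/2)ℤ with s > 0, the smallest submodule of the reduced shifted module containing the images of V ⊗ t^k for all k ∈ (1/2)ℤ with k > s equals the smallest submodule containing the images of u ⊗ t^k for all k ∈ (1/2)ℤ with k > s. -/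
noncomputable section

open Submodule

/-- An `L₀`-eigenvector of eigenvalue `h - m/2` lies in `D m`. -/
lemma aux_memD {c h : ℂ} {V : NSMod c} {u : V.carrier} {D : ℕ → Submodule ℂ V.carrier}
    (hV : GradedHW h V u D) (w : V.carrier) (m : ℕ)
    (hw : V.L 0 w = (h - (m : ℂ) / 2) • w) : w ∈ D m := by
  classical
  have htop := hV.internal.submodule_iSup_eq_top
  have hind : iSupIndep D := hV.internal.submodule_iSupIndep
  have hinj := hind.dfinsupp_lsum_injective
  set Φ : (Π₀ i, D i) →ₗ[ℂ] V.carrier :=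
    DFinsupp.lsum ℕ (M := fun i ↦ ↥(D i)) (fun i => (D i).subtype) with hΦ
  have hwmem : w ∈ iSup D := htop ▸ Submodule.mem_top
  rw [Submodule.mem_iSup_iff_exists_dfinsupp] at hwmem
  obtain ⟨f, hf⟩ := hwmem
  rw [← hΦ] at hf
  set C : ∀ i : ℕ, ↥(D i) →ₗ[ℂ] ↥(D i) :=
    fun i => ((h - (i : ℂ) / 2) - (h - (m : ℂ) / 2)) • LinearMap.id with hC
  have hcomm : Φ ∘ₗ DFinsupp.mapRange.linearMap C
      = (V.L 0) ∘ₗ Φ - (h - (m : ℂ) / 2) • Φ := by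
    apply DFinsupp.lhom_ext
    intro i x
    simp only [LinearMap.comp_apply, DFinsupp.mapRange.linearMap_apply, hC,
      LinearMap.sub_apply, LinearMap.smul_apply]
    rw [DFinsupp.mapRange_single, DFinsupp.lsum_single, DFinsupp.lsum_single]
    simp only [Submodule.coe_subtype, LinearMap.smul_apply, LinearMap.id_coe, id_eq,
      SetLike.val_smul]
    rw [hV.eig i x x.2, sub_smul]
  have h0 : DFinsupp.mapRange.linearMap C f = 0 := by
    apply hinj
    rw [map_zero]
    have := LinearMap.congr_fun hcomm f
    simp only [LinearMap.sub_apply, LinearMap.comp_apply, LinearMap.smul_apply] at this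
    rw [this, hf, hw, sub_self]
  have hcomp : ∀ i : ℕ, i ≠ m → f i = 0 := by
    intro i him
    have hi := DFinsupp.ext_iff.mp h0 i
    rw [DFinsupp.mapRange.linearMap_apply, DFinsupp.mapRange_apply] at hi
    have hs : ((h - (i : ℂ) / 2) - (h - (m : ℂ) / 2)) ≠ 0 := by
      intro hcon
      have h1 : (i : ℂ) = (m : ℂ) := by linear_combination -2 * hcon
      exact him (Nat.cast_injective h1)
    simp only [DFinsupp.coe_zero, Pi.zero_apply] at hi
    have hi2 : ((h - (i : ℂ) / 2) - (h - (m : ℂ) / 2)) • f i = 0 := by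
      rw [← hi, hC]; simp
    rcases smul_eq_zero.mp hi2 with hcon | hok
    · exact absurd hcon hs
    · exact hok
  have hfs : f = DFinsupp.single m (f m) := by
    ext i
    by_cases hi : i = m
    · subst hi; simp
    · rw [hcomp i hi, DFinsupp.single_eq_of_ne hi]
  rw [← hf, hfs, hΦ, DFinsupp.lsum_single]
  exact (f m).2
/-- The set of subspaces containing `u` and closed under the nonpositive `L`
operators and the negative `G` operators. -/
def closureSet {c : ℂ} (V : NSMod c) (u : V.carrier) : Set (Submodule ℂ V.carrier) :=
  {P | u ∈ P ∧ (∀ j : ℕ, ∀ v ∈ P, V.L (-(j : ℤ)) v ∈ P) ∧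
      (∀ j : ℕ, ∀ v ∈ P, V.G (-(j : ℤ) - 1) v ∈ P)}

lemma closure_eq_top {c h : ℂ} {V : NSMod c} {u : V.carrier} (hu : IsHW h V u) :
    sInf (closureSet V u) = ⊤ := by
  set N := sInf (closureSet V u) with hN
  have hNu : u ∈ N := Submodule.mem_sInf.mpr fun P hP => hP.1
  have hNL : ∀ j : ℕ, ∀ v ∈ N, V.L (-(j : ℤ)) v ∈ N := fun j v hv =>
    Submodule.mem_sInf.mpr fun P hP => hP.2.1 j v (Submodule.mem_sInf.mp hv P hP)
  have hNG : ∀ j : ℕ, ∀ v ∈ N, V.G (-(j : ℤ) - 1) v ∈ N := fun j v hv =>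
    Submodule.mem_sInf.mpr fun P hP => hP.2.2 j v (Submodule.mem_sInf.mp hv P hP)
  have hNL' : ∀ k : ℤ, k ≤ 0 → ∀ v ∈ N, V.L k v ∈ N := by
    intro k hk v hv
    obtain ⟨j, rfl⟩ : ∃ j : ℕ, k = -(j : ℤ) := ⟨(-k).toNat, by omega⟩
    exact hNL _ v hv
  have hNG' : ∀ k : ℤ, k ≤ -1 → ∀ v ∈ N, V.G k v ∈ N := by
    intro k hk v hv
    obtain ⟨j, rfl⟩ : ∃ j : ℕ, k = -(j : ℤ) - 1 := ⟨(-k - 1).toNat, by omega⟩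
    exact hNG _ v hv
  set N' : Submodule ℂ V.carrier :=
    { carrier := {v | v ∈ N ∧ (∀ k : ℤ, 1 ≤ k → V.L k v ∈ N) ∧
        (∀ k : ℤ, 0 ≤ k → V.G k v ∈ N)}
      add_mem' := by
        rintro x y ⟨hx1, hx2, hx3⟩ ⟨hy1, hy2, hy3⟩
        exact ⟨N.add_mem hx1 hy1,
          fun k hk => by rw [map_add]; exact N.add_mem (hx2 k hk) (hy2 k hk),
          fun k hk => by rw [map_add]; exact N.add_mem (hx3 k hk) (hy3 k hk)⟩
      zero_mem' := ⟨N.zero_mem,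
        fun k _ => by rw [map_zero]; exact N.zero_mem,
        fun k _ => by rw [map_zero]; exact N.zero_mem⟩
      smul_mem' := by
        rintro a x ⟨hx1, hx2, hx3⟩
        exact ⟨N.smul_mem a hx1,
          fun k hk => by rw [map_smul]; exact N.smul_mem a (hx2 k hk),
          fun k hk => by rw [map_smul]; exact N.smul_mem a (hx3 k hk)⟩ } with hN'def
  have hmemN' : ∀ v : V.carrier, v ∈ N' ↔ (v ∈ N ∧ (∀ k : ℤ, 1 ≤ k → V.L k v ∈ N) ∧
      (∀ k : ℤ, 0 ≤ k → V.G k v ∈ N)) := fun v => Iff.rfl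
  have hN'mem : N' ∈ closureSet V u := by
    refine ⟨?_, ?_, ?_⟩
    · exact ⟨hNu, fun k hk => by rw [hu.hwL k hk]; exact N.zero_mem,
        fun k hk => by rw [hu.hwG k hk]; exact N.zero_mem⟩
    · rintro j v ⟨hv1, hv2, hv3⟩
      refine ⟨hNL j v hv1, ?_, ?_⟩
      · intro k hk
        have hrel := V.rel_LL k (-(j : ℤ)) v
        rw [sub_eq_iff_eq_add] at hrel
        rw [hrel]
        refine N.add_mem (N.add_mem (N.smul_mem _ ?_) (N.smul_mem _ hv1)) (hNL j _ (hv2 k hk))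
        rcases le_or_gt (k + -(j : ℤ)) 0 with hle | hgt
        · exact hNL' _ hle v hv1
        · exact hv2 _ (by omega)
      · intro k hk
        have hrel := V.rel_LG (-(j : ℤ)) k v
        have hB := eq_sub_of_add_eq' (sub_eq_iff_eq_add.mp hrel).symm
        rw [hB]
        refine N.sub_mem (hNL j _ (hv3 k hk)) (N.smul_mem _ ?_)
        rcases le_or_gt 0 (-(j : ℤ) + k) with hle | hgt
        · exact hv3 _ hle
        · exact hNG' _ (by omega) v hv1
    · rintro j v ⟨hv1, hv2, hv3⟩
      refine ⟨hNG j v hv1, ?_, ?_⟩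
      · intro k hk
        have hrel := V.rel_LG k (-(j : ℤ) - 1) v
        rw [sub_eq_iff_eq_add] at hrel
        rw [hrel]
        refine N.add_mem (N.smul_mem _ ?_) (hNG j _ (hv2 k hk))
        rcases le_or_gt 0 (k + (-(j : ℤ) - 1)) with hle | hgt
        · exact hv3 _ hle
        · exact hNG' _ (by omega) v hv1
      · intro k hk
        have hrel := V.rel_GG k (-(j : ℤ) - 1) v
        have hB := eq_sub_of_add_eq hrel
        rw [hB]
        refine N.sub_mem (N.sub_mem (N.smul_mem _ ?_) (N.smul_mem _ hv1)) (hNG j _ (hv3 k hk))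
        rcases le_or_gt (k + (-(j : ℤ) - 1) + 1) 0 with hle | hgt
        · exact hNL' _ hle v hv1
        · exact hv2 _ (by omega)
  have hNle : N ≤ N' := sInf_le hN'mem
  have hsub : V.IsSubmodule N := by
    constructor
    · intro m v hv
      rcases le_or_gt m 0 with hle | hgt
      · exact hNL' m hle v hv
      · exact ((hmemN' v).mp (hNle hv)).2.1 m (by omega)
    · intro k v hv
      rcases le_or_gt k (-1) with hle | hgt
      · exact hNG' k hle v hv
      · exact ((hmemN' v).mp (hNle hv)).2.2 k (by omega)
  exact hu.gen N hsub hNu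
lemma aux_key {a b c h : ℂ} {V : NSMod c} {u : V.carrier} {D : ℕ → Submodule ℂ V.carrier}
    (hV : GradedHW h V u D) {R : NSMod c} (rsw : RedShiftedWitness a b V D R)
    (p₀ : ℤ) (W : Submodule ℂ R.carrier) (hW : R.IsSubmodule W)
    (hWu : ∀ p : ℤ, p₀ < p → rsw.ι p u ∈ W) :
    ∀ p : ℤ, p₀ < p → ∀ v : V.carrier, rsw.ι p v ∈ W := by
  classical
  set X : Submodule ℂ V.carrier := ⨅ (q : ℤ) (_ : p₀ < q), W.comap (rsw.ι q) with hX
  have memX : ∀ w : V.carrier, w ∈ X ↔ ∀ q : ℤ, p₀ < q → rsw.ι q w ∈ W := by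
    intro w
    simp [hX, Submodule.mem_iInf, Submodule.mem_comap]
  set T : Submodule ℂ V.carrier := ⨆ n : ℕ, (D n ⊓ X) with hT
  have hTX : T ≤ X := iSup_le fun n => inf_le_right
  have hTmem : T ∈ closureSet V u := by
    refine ⟨?_, ?_, ?_⟩
    · exact Submodule.mem_iSup_of_mem 0 ⟨hV.u_mem, (memX u).mpr hWu⟩
    · -- closure under L (-j)
      intro j v₀ hv₀
      refine Submodule.iSup_induction (motive := fun w => V.L (-(j : ℤ)) w ∈ T) _ hv₀ ?_ ?_ ?_
      · rintro n w ⟨hwD, hwX⟩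
        by_cases hj : j = 0
        · subst hj
          rw [show (-((0 : ℕ) : ℤ)) = 0 by norm_num, hV.eig n w hwD]
          exact T.smul_mem _ (Submodule.mem_iSup_of_mem n ⟨hwD, hwX⟩)
        · have heig : V.L 0 (V.L (-(j : ℤ)) w)
              = (h - ((n + 2 * j : ℕ) : ℂ) / 2) • V.L (-(j : ℤ)) w := by
            have hrel := V.rel_LL 0 (-(j : ℤ)) w
            rw [hV.eig n w hwD, map_smul, sub_eq_iff_eq_add] at hrel
            rw [hrel, if_neg (by omega), zero_add]
            match_scalars <;> (push_cast; ring)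
          have hD2 : V.L (-(j : ℤ)) w ∈ D (n + 2 * j) := aux_memD hV _ _ heig
          have hX2 : V.L (-(j : ℤ)) w ∈ X := by
            rw [memX]
            intro q hq
            have hact := rsw.actL (-(j : ℤ)) (q + 2 * (j : ℤ)) n w hwD
            have e1 : q + 2 * (j : ℤ) + 2 * -(j : ℤ) = q := by ring
            rw [e1] at hact
            rw [eq_sub_of_add_eq hact.symm]
            exact W.sub_mem (hW.1 _ _ ((memX w).mp hwX _ (by omega)))
              (W.smul_mem _ ((memX w).mp hwX q hq))
          exact Submodule.mem_iSup_of_mem (n + 2 * j) ⟨hD2, hX2⟩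
      · show V.L (-(j : ℤ)) (0 : V.carrier) ∈ T
        rw [map_zero]; exact T.zero_mem
      · intro x y hx hy
        show V.L (-(j : ℤ)) (x + y) ∈ T
        rw [map_add]; exact T.add_mem hx hy
    · -- closure under G (-j-1)
      intro j v₀ hv₀
      refine Submodule.iSup_induction (motive := fun w => V.G (-(j : ℤ) - 1) w ∈ T) _ hv₀ ?_ ?_ ?_
      · rintro n w ⟨hwD, hwX⟩
        have heig : V.L 0 (V.G (-(j : ℤ) - 1) w)
            = (h - ((n + 2 * j + 1 : ℕ) : ℂ) / 2) • V.G (-(j : ℤ) - 1) w := by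
          have hrel := V.rel_LG 0 (-(j : ℤ) - 1) w
          rw [hV.eig n w hwD, map_smul, sub_eq_iff_eq_add] at hrel
          rw [hrel, zero_add]
          match_scalars <;> (push_cast; ring)
        have hD2 : V.G (-(j : ℤ) - 1) w ∈ D (n + 2 * j + 1) := aux_memD hV _ _ heig
        have hX2 : V.G (-(j : ℤ) - 1) w ∈ X := by
          rw [memX]
          intro q hq
          have hact := rsw.actG (-(j : ℤ) - 1) (q + 2 * (j : ℤ) + 1) n w hwD
          have e1 : q + 2 * (j : ℤ) + 1 + 2 * (-(j : ℤ) - 1) + 1 = q := by ring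
          rw [e1] at hact
          rw [eq_sub_of_add_eq hact.symm]
          exact W.sub_mem (hW.2 _ _ ((memX w).mp hwX _ (by omega)))
            (W.smul_mem _ ((memX w).mp hwX q hq))
        exact Submodule.mem_iSup_of_mem (n + 2 * j + 1) ⟨hD2, hX2⟩
      · show V.G (-(j : ℤ) - 1) (0 : V.carrier) ∈ T
        rw [map_zero]; exact T.zero_mem
      · intro x y hx hy
        show V.G (-(j : ℤ) - 1) (x + y) ∈ T
        rw [map_add]; exact T.add_mem hx hy
  have hTtop : (⊤ : Submodule ℂ V.carrier) ≤ T := by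
    rw [← closure_eq_top hV.hw]
    exact sInf_le hTmem
  intro p hp v
  exact (memX v).mp (hTX (hTtop Submodule.mem_top)) p hp
/-- Corollary 3.5: for `0 < s ∈ (1/2)ℤ` (recorded as
`s = p₀/2`), the smallest submodule of the reduced shifted module containing
the images of `V ⊗ t^k` for all `k > s` coincides with the smallest
submodule containing the images of `u ⊗ t^k` for all `k > s`. -/
theorem reduced_shifted_tail_generators (a b c h : ℂ)
    (ha0 : 0 ≤ a.re) (ha1 : a.re < 1) (hb : b ≠ 1)
    (V : NSMod c) (u : V.carrier) (D : ℕ → Submodule ℂ V.carrier)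
    (hV : GradedHW h V u D) (hsimple : V.IsSimple)
    (R : NSMod c) (rsw : RedShiftedWitness a b V D R)
    (p₀ : ℤ) (hp₀ : 0 < p₀) :
    sInf {W : Submodule ℂ R.carrier | R.IsSubmodule W ∧
        ∀ p : ℤ, p₀ < p → ∀ v : V.carrier, rsw.ι p v ∈ W}
      = sInf {W : Submodule ℂ R.carrier | R.IsSubmodule W ∧
          ∀ p : ℤ, p₀ < p → rsw.ι p u ∈ W} := by
  have hset : {W : Submodule ℂ R.carrier | R.IsSubmodule W ∧
        ∀ p : ℤ, p₀ < p → ∀ v : V.carrier, rsw.ι p v ∈ W}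
      = {W : Submodule ℂ R.carrier | R.IsSubmodule W ∧
          ∀ p : ℤ, p₀ < p → rsw.ι p u ∈ W} := by
    ext W
    constructor
    · rintro ⟨h1, h2⟩
      exact ⟨h1, fun p hp => h2 p hp u⟩
    · rintro ⟨h1, h2⟩
      exact ⟨h1, aux_key hV rsw p₀ W h1 h2⟩
  rw [hset]
end
end

section
/- Let a, b ∈ ℂ with 0 ≤ Re(a) < 1 and b ≠ 1. Let M = M(c, h) be the Verma module with highest weight vector u, decomposed as M = ⨁_{n ∈ ℕ} M_{h−n/2} into L₀-eigenspaces (even for n even, odd for n odd). Let J be a submodule of M with u ∉ J, let V = M/J with the induced Neveu–Schwarz module structure, highest weight vector ū = u + J, and the induced decomposition V_{h−n/2} = image of M_{h−n/2}. Fix s ∈ (1/2)ℤ with s > 0 and suppose φ_s : M → ℂ is a shifted character at level s. If W is a submodule of the reduced shifted module of V containing the images of ū ⊗ t^k for all k ∈ (1/2)ℤ with k > s, then for every w ∈ M the image of (w + J) ⊗ t^s − φ_s(w)·(ū ⊗ t^s) lies in W. -/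
noncomputable section

open Submodule

/-- Lemma 3.6: let `V = M/J` be a quotient of the Verma
module `M = M(c,h)` (with `u ∉ J`), with quotient map `π` and induced grading
`n ↦ (MD n).map π`, and let `φ` be a shifted character at level `s = p/2 > 0`.
If a submodule `W` of the reduced shifted module of `V` contains the images
of `ū ⊗ t^k` for all `k > s`, then for every `w ∈ M` the element
`(w + J) ⊗ t^s − φ(w)·(ū ⊗ t^s)` lies in `W`. -/
theorem shifted_character_congruence (a b c h : ℂ)
    (ha0 : 0 ≤ a.re) (ha1 : a.re < 1) (hb : b ≠ 1)
    (M : NSMod c) (u : M.carrier) (MD : ℕ → Submodule ℂ M.carrier)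
    (hM : IsVerma h M u) (hMD : GradedHW h M u MD)
    (J : Submodule ℂ M.carrier) (hJ : M.IsSubmodule J) (huJ : u ∉ J)
    (V : NSMod c) (π : M.carrier →ₗ[ℂ] V.carrier)
    (hπL : ∀ (m : ℤ) (w : M.carrier), π (M.L m w) = V.L m (π w))
    (hπG : ∀ (k : ℤ) (w : M.carrier), π (M.G k w) = V.G k (π w))
    (hπsurj : Function.Surjective π) (hπker : LinearMap.ker π = J)
    (hπeven : V.even = M.even.map π) (hπodd : V.odd = M.odd.map π)
    (R : NSMod c) (rsw : RedShiftedWitness a b V (fun n => (MD n).map π) R)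
    (p : ℤ) (hp : 0 < p)
    (φ : M.carrier →ₗ[ℂ] ℂ) (hφ : IsShiftedChar a b M MD u p φ)
    (W : Submodule ℂ R.carrier) (hW : R.IsSubmodule W)
    (hgen : ∀ q : ℤ, p < q → rsw.ι q (π u) ∈ W) :
    ∀ w : M.carrier, rsw.ι p (π w) - φ w • rsw.ι p (π u) ∈ W := by
  classical
  obtain ⟨hHW, hindep, hspan⟩ := hM
  obtain ⟨hφu, hφL, hφG⟩ := hφ
  -- injectivity of eigenvalues
  have hinj : Function.Injective (fun n : ℕ => h - (n : ℂ) / 2) := by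
    intro m n hmn
    simp only at hmn
    have hc : (m : ℂ) = (n : ℂ) := by linear_combination (-2 : ℂ) * hmn
    exact_mod_cast hc
  -- an L₀-eigenvector with eigenvalue h - m/2 lies in MD m
  have heig : ∀ (m : ℕ) (v : M.carrier), M.L 0 v = (h - (m : ℂ) / 2) • v → v ∈ MD m := by
    intro m v hv
    have hint := hMD.internal
    rw [DirectSum.isInternal_submodule_iff_iSupIndep_and_iSup_eq_top] at hint
    obtain ⟨hIndep, hTop⟩ := hint
    have hv' : v ∈ ⨆ n, MD n := by rw [hTop]; exact Submodule.mem_top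
    rw [Submodule.mem_iSup_iff_exists_finsupp] at hv'
    obtain ⟨f, hf, hsum⟩ := hv'
    set T : Module.End ℂ M.carrier := M.L 0 with hT
    have hE : ∀ n : ℕ, MD n ≤ T.eigenspace (h - (n : ℂ) / 2) := fun n x hx =>
      Module.End.mem_eigenspace_iff.mpr (hMD.eig n x hx)
    have hv2 : v - f m = ∑ n ∈ f.support.erase m, f n := by
      rw [← hsum, Finsupp.sum]
      by_cases hm : m ∈ f.support
      · rw [← Finset.add_sum_erase _ _ hm, add_sub_cancel_left]
      · rw [Finset.erase_eq_of_notMem hm, Finsupp.notMem_support_iff.1 hm, sub_zero]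
    have hrest : v - f m ∈ T.eigenspace (h - (m : ℂ) / 2) :=
      Submodule.sub_mem _ (Module.End.mem_eigenspace_iff.mpr hv) (hE m (hf m))
    have hrest2 : v - f m ∈ ⨆ (μ : ℂ) (_ : μ ≠ h - (m : ℂ) / 2), T.eigenspace μ := by
      rw [hv2]
      refine Submodule.sum_mem _ fun n hn => ?_
      have hnm : n ≠ m := Finset.ne_of_mem_erase hn
      have hne : h - (n : ℂ) / 2 ≠ h - (m : ℂ) / 2 := fun hc => hnm (hinj hc)
      exact Submodule.mem_iSup_of_mem _ (Submodule.mem_iSup_of_mem hne (hE n (hf n)))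
    have h0 : v - f m = 0 :=
      Submodule.disjoint_def.mp (T.eigenspaces_iSupIndep (h - (m : ℂ) / 2)) _ hrest hrest2
    have hveq : v = f m := by rwa [sub_eq_zero] at h0
    rw [hveq]; exact hf m
  -- algebraic key lemma
  have key : ∀ (x y z : R.carrier) (C t s : ℂ), s = -(C * t) → x ∈ W →
      y - t • z ∈ W → x - C • y - s • z ∈ W := by
    intro x y z C t s hs hx hy
    have h9 : x - C • y - s • z = x - C • (y - t • z) := by rw [hs]; module
    rw [h9]
    exact Submodule.sub_mem _ hx (Submodule.smul_mem _ _ hy)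
  -- step lemma for L
  have stepL : ∀ (kn n : ℕ) (w : M.carrier), w ∈ MD n →
      (∀ q : ℤ, p < q → rsw.ι q (π w) ∈ W) →
      rsw.ι p (π w) - φ w • rsw.ι p (π u) ∈ W →
      (M.L (-((kn : ℤ) + 1)) w ∈ MD (n + 2 * (kn + 1))) ∧
      (∀ q : ℤ, p < q → rsw.ι q (π (M.L (-((kn : ℤ) + 1)) w)) ∈ W) ∧
      rsw.ι p (π (M.L (-((kn : ℤ) + 1)) w))
        - φ (M.L (-((kn : ℤ) + 1)) w) • rsw.ι p (π u) ∈ W := by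
    intro kn n w hw hA hB
    have hmem : π w ∈ (MD n).map π := Submodule.mem_map_of_mem hw
    refine ⟨?_, ?_, ?_⟩
    · apply heig
      have hrel := M.rel_LL 0 (-((kn : ℤ) + 1)) w
      rw [show (0 : ℤ) + -((kn : ℤ) + 1) = -((kn : ℤ) + 1) from by ring] at hrel
      rw [if_neg (by omega : ¬(-((kn : ℤ) + 1) = 0))] at hrel
      rw [hMD.eig n w hw, map_smul] at hrel
      rw [eq_add_of_sub_eq hrel]
      push_cast
      module
    · intro q hq
      have hact := rsw.actL (-((kn : ℤ) + 1)) (q + 2 * ((kn : ℤ) + 1)) n (π w) hmem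
      rw [show q + 2 * ((kn : ℤ) + 1) + 2 * -((kn : ℤ) + 1) = q from by ring] at hact
      rw [← hπL] at hact
      rw [eq_sub_of_add_eq hact.symm]
      exact Submodule.sub_mem _ (hW.1 _ _ (hA _ (by omega)))
        (Submodule.smul_mem _ _ (hA q hq))
    · have hact := rsw.actL (-((kn : ℤ) + 1)) (p + 2 * ((kn : ℤ) + 1)) n (π w) hmem
      rw [show p + 2 * ((kn : ℤ) + 1) + 2 * -((kn : ℤ) + 1) = p from by ring] at hact
      rw [← hπL] at hact
      rw [eq_sub_of_add_eq hact.symm]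
      refine key _ _ _ _ _ _ ?_ (hW.1 _ _ (hA _ (by omega))) hB
      rw [hφL n w hw ((kn : ℤ) + 1) (by omega)]
      by_cases hd : (2 : ℤ) ∣ (p - (n : ℤ))
      · rw [if_pos hd, if_pos (by omega : (2 : ℤ) ∣ (p + 2 * ((kn : ℤ) + 1) - (n : ℤ)))]
        push_cast
        ring
      · rw [if_neg hd, if_neg (by omega : ¬(2 : ℤ) ∣ (p + 2 * ((kn : ℤ) + 1) - (n : ℤ)))]
        push_cast
        ring
  -- step lemma for G
  have stepG : ∀ (kn n : ℕ) (w : M.carrier), w ∈ MD n →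
      (∀ q : ℤ, p < q → rsw.ι q (π w) ∈ W) →
      rsw.ι p (π w) - φ w • rsw.ι p (π u) ∈ W →
      (M.G (-((kn : ℤ) + 1)) w ∈ MD (n + (2 * kn + 1))) ∧
      (∀ q : ℤ, p < q → rsw.ι q (π (M.G (-((kn : ℤ) + 1)) w)) ∈ W) ∧
      rsw.ι p (π (M.G (-((kn : ℤ) + 1)) w))
        - φ (M.G (-((kn : ℤ) + 1)) w) • rsw.ι p (π u) ∈ W := by
    intro kn n w hw hA hB
    have hmem : π w ∈ (MD n).map π := Submodule.mem_map_of_mem hw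
    refine ⟨?_, ?_, ?_⟩
    · apply heig
      have hrel := M.rel_LG 0 (-((kn : ℤ) + 1)) w
      rw [show (0 : ℤ) + -((kn : ℤ) + 1) = -((kn : ℤ) + 1) from by ring] at hrel
      rw [hMD.eig n w hw, map_smul] at hrel
      rw [eq_add_of_sub_eq hrel]
      push_cast
      module
    · intro q hq
      have hact := rsw.actG (-((kn : ℤ) + 1)) (q + 2 * ((kn : ℤ) + 1) - 1) n (π w) hmem
      rw [show q + 2 * ((kn : ℤ) + 1) - 1 + 2 * -((kn : ℤ) + 1) + 1 = q from by ring] at hact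
      rw [← hπG] at hact
      rw [eq_sub_of_add_eq hact.symm]
      exact Submodule.sub_mem _ (hW.2 _ _ (hA _ (by omega)))
        (Submodule.smul_mem _ _ (hA q hq))
    · have hact := rsw.actG (-((kn : ℤ) + 1)) (p + 2 * ((kn : ℤ) + 1) - 1) n (π w) hmem
      rw [show p + 2 * ((kn : ℤ) + 1) - 1 + 2 * -((kn : ℤ) + 1) + 1 = p from by ring] at hact
      rw [← hπG] at hact
      rw [eq_sub_of_add_eq hact.symm]
      refine key _ _ _ _ _ _ ?_ (hW.2 _ _ (hA _ (by omega))) hB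
      rw [hφG n w hw ((kn : ℤ) + 1) (by omega)]
      by_cases hd : (2 : ℤ) ∣ (p - (n : ℤ))
      · rw [if_pos hd,
          if_neg (by omega : ¬(2 : ℤ) ∣ (p + 2 * ((kn : ℤ) + 1) - 1 - (n : ℤ)))]
        push_cast
        ring
      · rw [if_neg hd,
          if_pos (by omega : (2 : ℤ) ∣ (p + 2 * ((kn : ℤ) + 1) - 1 - (n : ℤ)))]
        push_cast
        ring
  -- base case
  have hbaseB : rsw.ι p (π u) - φ u • rsw.ι p (π u) ∈ W := by
    rw [hφu, one_smul, sub_self]; exact W.zero_mem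
  -- monomials in the G's
  have hmonoG : ∀ l : List ℤ, (∀ j ∈ l, 1 ≤ j) →
      (∃ n, ((l.map fun j => M.G (-j)).foldr (fun f v => f v) u) ∈ MD n) ∧
      (∀ q : ℤ, p < q →
        rsw.ι q (π ((l.map fun j => M.G (-j)).foldr (fun f v => f v) u)) ∈ W) ∧
      rsw.ι p (π ((l.map fun j => M.G (-j)).foldr (fun f v => f v) u))
        - φ ((l.map fun j => M.G (-j)).foldr (fun f v => f v) u) • rsw.ι p (π u) ∈ W := by
    intro l
    induction l with
    | nil => exact fun _ => ⟨⟨0, hMD.u_mem⟩, hgen, hbaseB⟩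
    | cons j l ih =>
      intro hl
      obtain ⟨⟨n, h1⟩, h2, h3⟩ := ih fun x hx => hl x (List.mem_cons_of_mem _ hx)
      have hj : 1 ≤ j := hl j List.mem_cons_self
      obtain ⟨kn, rfl⟩ : ∃ kn : ℕ, j = (kn : ℤ) + 1 := ⟨(j - 1).toNat, by omega⟩
      obtain ⟨g1, g2, g3⟩ := stepG kn n _ h1 h2 h3
      exact ⟨⟨n + (2 * kn + 1), g1⟩, g2, g3⟩
  -- monomials in the L's
  have hmonoL : ∀ l : List ℤ, (∀ j ∈ l, 1 ≤ j) → ∀ w : M.carrier,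
      (∃ n, w ∈ MD n) →
      (∀ q : ℤ, p < q → rsw.ι q (π w) ∈ W) →
      rsw.ι p (π w) - φ w • rsw.ι p (π u) ∈ W →
      (∃ n, ((l.map fun j => M.L (-j)).foldr (fun f v => f v) w) ∈ MD n) ∧
      (∀ q : ℤ, p < q →
        rsw.ι q (π ((l.map fun j => M.L (-j)).foldr (fun f v => f v) w)) ∈ W) ∧
      rsw.ι p (π ((l.map fun j => M.L (-j)).foldr (fun f v => f v) w))
        - φ ((l.map fun j => M.L (-j)).foldr (fun f v => f v) w) • rsw.ι p (π u) ∈ W := by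
    intro l
    induction l with
    | nil => exact fun _ w h1 h2 h3 => ⟨h1, h2, h3⟩
    | cons j l ih =>
      intro hl w h1 h2 h3
      obtain ⟨⟨n, g1⟩, g2, g3⟩ :=
        ih (fun x hx => hl x (List.mem_cons_of_mem _ hx)) w h1 h2 h3
      have hj : 1 ≤ j := hl j List.mem_cons_self
      obtain ⟨kn, rfl⟩ : ∃ kn : ℕ, j = (kn : ℤ) + 1 := ⟨(j - 1).toNat, by omega⟩
      obtain ⟨f1, f2, f3⟩ := stepL kn n _ g1 g2 g3
      exact ⟨⟨n + 2 * (kn + 1), f1⟩, f2, f3⟩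
  -- all PBW monomials satisfy the congruence
  have hQmon : ∀ pr : VermaIndex,
      rsw.ι p (π (vermaMonomial M u pr.1))
        - φ (vermaMonomial M u pr.1) • rsw.ι p (π u) ∈ W := by
    rintro ⟨⟨l1, l2⟩, hc1, hp1, hc2, hp2⟩
    obtain ⟨g1, g2, g3⟩ := hmonoG l2 hp2
    exact (hmonoL l1 hp1 _ g1 g2 g3).2.2
  -- conclude by spanning
  intro w
  have hwmem : w ∈ Submodule.span ℂ
      (Set.range fun pr : VermaIndex => vermaMonomial M u pr.1) := by
    rw [hspan]; exact Submodule.mem_top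
  set F : M.carrier →ₗ[ℂ] R.carrier :=
    (rsw.ι p).comp π - (LinearMap.toSpanSingleton ℂ R.carrier (rsw.ι p (π u))).comp φ
    with hF
  have hle : Submodule.span ℂ
      (Set.range fun pr : VermaIndex => vermaMonomial M u pr.1) ≤ Submodule.comap F W := by
    rw [Submodule.span_le]
    rintro _ ⟨pr, rfl⟩
    simpa only [SetLike.mem_coe, Submodule.mem_comap, hF, LinearMap.sub_apply,
      LinearMap.comp_apply, LinearMap.toSpanSingleton_apply] using hQmon pr
  have := hle hwmem
  simpa only [Submodule.mem_comap, hF, LinearMap.sub_apply, LinearMap.comp_apply,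
    LinearMap.toSpanSingleton_apply] using this
end
end
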